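/- With the notation and hypotheses of the Basic equivalence Lemma (two distinct points of Y^m × X_{n−m} having the same projection to X_n, with associated index k and points ξ₀, ξ₀' ∈ X₀), the common image satisfies π_{m,n−m}(y₁,…,y_m,ξ) ∈ φ_{n,k}(X_k); in fact π_{m,n−m}(y₁,…,y_m,ξ) = φ_{n,k}(π_{k,0}(y₁,…,y_k,ξ₀)). -/
import Mathlib


set_option linter.unusedSectionVars false
set_option linter.unusedVariables false

variable {Y : Type}

/-- Iterated embedding φ_{n,m} : X m → X n for m ≤ n. -/
def phiTo (X : ℕ → Type) (φs : ∀ n, X n → X (n + 1)) {m n : ℕ} (h : m ≤ n) (x : X m) : X n :=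
  Nat.leRecOn h (fun {k} x => φs k x) x

/-- Iterated projection π_{m,q} : Yᵐ × X q → X (q+m), the head of the word acting outermost. -/
def piFin (X : ℕ → Type) (πo : ∀ n, Y → X n → X (n + 1)) :
    ∀ (m q : ℕ), (Fin m → Y) → X q → X (q + m)
  | 0, _, _, x => x
  | m + 1, q, y, x => πo (q + m) (y 0) (piFin X πo m q (fun i => y i.succ) x)

/-- Iterated projection π_{m,0} : Yᵐ × X 0 → X m. -/
def piFin0 (X : ℕ → Type) (πo : ∀ n, Y → X n → X (n + 1)) :
    ∀ (m : ℕ), (Fin m → Y) → X 0 → X m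
  | 0, _, x => x
  | m + 1, y, x => πo m (y 0) (piFin0 X πo m (fun i => y i.succ) x)

/-- The set Γ_n(x_n) ⊂ Y^ℕ : all infinite addresses y such that for every p ≥ n the point
φ_{p,n}(x_n) lies in the cell C(y₁,…,y_p) = π_{p,0}({(y₁,…,y_p)} × X 0). -/
def Gamma (X : ℕ → Type) (φs : ∀ n, X n → X (n + 1)) (πo : ∀ n, Y → X n → X (n + 1))
    (n : ℕ) (xn : X n) : Set (ℕ → Y) :=
  { y | ∀ p, ∀ h : n ≤ p, ∃ x0 : X 0, phiTo X φs h xn = piFin0 X πo p (fun i : Fin p => y i.1) x0 }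

/-- The relation R on Y^ℕ: related iff equal or both in some Γ_n(x_n). -/
def simRel (X : ℕ → Type) (φs : ∀ n, X n → X (n + 1)) (πo : ∀ n, Y → X n → X (n + 1)) :
    (ℕ → Y) → (ℕ → Y) → Prop :=
  fun a b => a = b ∨ ∃ n, ∃ xn : X n, a ∈ Gamma X φs πo n xn ∧ b ∈ Gamma X φs πo n xn

variable {X : ℕ → Type}
  [TopologicalSpace Y] [CompactSpace Y] [T2Space Y]
  [∀ n, TopologicalSpace (X n)] [∀ n, CompactSpace (X n)] [∀ n, T2Space (X n)]


/-- ℕ-indexed version of `piFin`. -/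
def piN (X : ℕ → Type) (πo : ∀ n, Y → X n → X (n + 1)) :
    ∀ (m q : ℕ), (ℕ → Y) → X q → X (q + m)
  | 0, _, _, x => x
  | m + 1, q, g, x => πo (q + m) (g 0) (piN X πo m q (fun n => g (n + 1)) x)

lemma piFin_eq_piN (X : ℕ → Type) (πo : ∀ n, Y → X n → X (n + 1)) (g : ℕ → Y) :
    ∀ (a q : ℕ) (f : Fin a → Y), (∀ i : Fin a, f i = g i.1) → ∀ ξ : X q,
      piFin X πo a q f ξ = piN X πo a q g ξ
  | 0, q, f, hf, ξ => rfl
  | a + 1, q, f, hf, ξ => by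
      show πo (q + a) (f 0) (piFin X πo a q (fun i => f i.succ) ξ)
        = πo (q + a) (g 0) (piN X πo a q (fun n => g (n + 1)) ξ)
      rw [hf 0,
        piFin_eq_piN X πo (fun n => g (n + 1)) a q (fun i => f i.succ)
          (fun i => (hf i.succ).trans rfl) ξ, Fin.val_zero]

lemma comm_phi (X : ℕ → Type) (φs : ∀ n, X n → X (n + 1)) (πo : ∀ n, Y → X n → X (n + 1))
    (hcomm : ∀ (n : ℕ) (y : Y) (x : X n), πo (n + 1) y (φs n x) = φs (n + 1) (πo n y x)) :
    ∀ {c n : ℕ} (h : c ≤ n) (yy : Y) (x : X c),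
      πo n yy (phiTo X φs h x) = phiTo X φs (Nat.succ_le_succ h) (πo c yy x) := by
  intro c n h
  induction n, h using Nat.le_induction with
  | base =>
    intro yy x
    simp only [phiTo, Nat.leRecOn_self]
  | succ n h ih =>
    intro yy x
    have e1 : phiTo X φs (Nat.le_succ_of_le h) x = φs n (phiTo X φs h x) := by
      simp only [phiTo, Nat.leRecOn_succ h]
    have e2 : phiTo X φs (Nat.succ_le_succ (Nat.le_succ_of_le h)) (πo c yy x)
        = φs (n + 1) (phiTo X φs (Nat.succ_le_succ h) (πo c yy x)) := by
      simp only [phiTo, Nat.leRecOn_succ (Nat.succ_le_succ h)]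
    rw [e1, hcomm, ih, e2]

lemma mainN (X : ℕ → Type) (φs : ∀ n, X n → X (n + 1)) (πo : ∀ n, Y → X n → X (n + 1))
    (hcomm : ∀ (n : ℕ) (y : Y) (x : X n), πo (n + 1) y (φs n x) = φs (n + 1) (πo n y x)) :
    ∀ (k : ℕ) (g : ℕ → Y) (j q : ℕ) (ξ : X q) (x0 : X 0),
      piN X πo j q (fun n => g (k + n)) ξ = phiTo X φs (Nat.zero_le _) x0 →
      piN X πo (j + k) q g ξ
        = phiTo X φs (by omega : k ≤ q + (j + k))
            (piFin0 X πo k (fun i : Fin k => g i.1) x0) := by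
  intro k
  induction k with
  | zero =>
    intro g j q ξ x0 h
    simp only [Nat.zero_add] at h
    exact h
  | succ k ih =>
    intro g j q ξ x0 h
    have h' : piN X πo j q (fun n => (fun n => g (n + 1)) (k + n)) ξ
        = phiTo X φs (Nat.zero_le _) x0 := by
      have e : (fun n => g (k + n + 1)) = (fun n => g (k + 1 + n)) :=
        funext fun n => by congr 1; omega
      rw [e]; exact h
    have H := ih (fun n => g (n + 1)) j q ξ x0 h'
    show πo (q + (j + k)) (g 0) (piN X πo (j + k) q (fun n => g (n + 1)) ξ) = _
    rw [H, comm_phi X φs πo hcomm]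
    rfl

theorem statement_2
    (φs : ∀ n, X n → X (n + 1)) (πo : ∀ n, Y → X n → X (n + 1))
    (hφc : ∀ n, Continuous (φs n)) (hφi : ∀ n, Function.Injective (φs n))
    (hπc : ∀ n, Continuous fun p : Y × X n => πo n p.1 p.2)
    (hπs : ∀ n, Function.Surjective fun p : Y × X n => πo n p.1 p.2)
    (hcomm : ∀ (n : ℕ) (y : Y) (x : X n), πo (n + 1) y (φs n x) = φs (n + 1) (πo n y x))
    (hquot : ∀ (n : ℕ) (y y' : Y) (ξ ξ' : X n), πo n y ξ = πo n y' ξ' → (y, ξ) ≠ (y', ξ') →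
      ∃ x0 x0' : X 0, ξ = phiTo X φs (Nat.zero_le n) x0 ∧ ξ' = phiTo X φs (Nat.zero_le n) x0' ∧
        πo 0 y x0 = πo 0 y' x0')
    (m q k : ℕ) (hk1 : 1 ≤ k) (hk2 : k ≤ m) (y y' : Fin m → Y) (ξ ξ' : X q)
    (x0 x0' : X 0)
    (hne : (y, ξ) ≠ (y', ξ'))
    (heq : piFin X πo m q y ξ = piFin X πo m q y' ξ')
    (h1 : ∀ i : Fin m, (i : ℕ) < k - 1 → y i = y' i)
    (h2 : piFin X πo (m - k) q (fun i => y ⟨k + i.1, by have := i.2; omega⟩) ξ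
        = phiTo X φs (Nat.zero_le (q + (m - k))) x0)
    (h2' : piFin X πo (m - k) q (fun i => y' ⟨k + i.1, by have := i.2; omega⟩) ξ'
        = phiTo X φs (Nat.zero_le (q + (m - k))) x0')
    (h3 : πo 0 (y ⟨k - 1, by omega⟩) x0 = πo 0 (y' ⟨k - 1, by omega⟩) x0') :
    piFin X πo m q y ξ
      = phiTo X φs (show k ≤ q + m by omega)
          (piFin0 X πo k (fun i : Fin k => y ⟨i.1, by have := i.2; omega⟩) x0) := by
  obtain ⟨j, rfl⟩ : ∃ j, m = j + k := ⟨m - k, by omega⟩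
  set g : ℕ → Y := fun n => y ⟨min n (j + k - 1), by omega⟩ with hg
  have hgy : ∀ i : Fin (j + k), y i = g i.1 := by
    intro i
    have hi := i.2
    rw [hg]
    exact congrArg y (Fin.ext (by simp; omega))
  have h2pi : piN X πo j q (fun n => g (k + n)) ξ = phiTo X φs (Nat.zero_le (q + j)) x0 := by
    have h2' := (piFin_eq_piN X πo (fun n => g (k + n)) ((j + k) - k) q
      (fun i => y ⟨k + i.1, by have := i.2; omega⟩)
      (fun i => by
        have hi := i.2
        rw [hg]
        exact congrArg y (Fin.ext (by simp; omega))) ξ).symm.trans h2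
    rw [Nat.add_sub_cancel] at h2'
    exact h2'
  have H := mainN X φs πo hcomm k g j q ξ x0 h2pi
  rw [piFin_eq_piN X πo g (j + k) q y hgy ξ, H]
  have e : (fun i : Fin k => g i.1)
      = (fun i : Fin k => y ⟨i.1, by have := i.2; omega⟩) :=
    funext fun i => (hgy ⟨i.1, by have := i.2; omega⟩).symm
  rw [e]
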